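/- arXiv:1611.06899 — 3 statements merged into one kernel-verified Lean document; each statement's English description precedes it below -/
import Mathlib

section
/- Let k be an even integer and let s, w ∈ ℂ satisfy 2 < Re(s) < k−2, Re(w) < Re(s)−1 and Re(w) < k−1−Re(s). Then for every z in the upper half-plane ℍ the double series 𝓔_{s,k−s}(z,w) = Σ_{γ,δ ∈ B∖Γ, c_{γδ⁻¹}>0} (c_{γδ⁻¹})^{w−1} (j(γ,z)/j(δ,z))^{−s} j(δ,z)^{−k} converges absolutely, i.e. the family of its terms (indexed by pairs of cosets Bγ, Bδ with c_{γδ⁻¹} > 0) is summable. -/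
open Complex Matrix MatrixGroups

noncomputable section

/-- `Γ = SL₂(ℤ)`. -/
abbrev SL2Z := Matrix.SpecialLinearGroup (Fin 2) ℤ

/-- `j(γ, z) = c z + d`. -/
def jc (g : SL2Z) (z : ℂ) : ℂ := (g.1 1 0 : ℂ) * z + (g.1 1 1 : ℂ)

/-- `c_γ`, the lower-left entry of `γ`. -/
def cEnt (g : SL2Z) : ℤ := g.1 1 0

/-- The subgroup `B = {(1 n; 0 1) : n ∈ ℤ}`, i.e. the powers of `T = (1 1; 0 1)`. -/
def Bsub : Subgroup SL2Z := Subgroup.zpowers ModularGroup.T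

/-- The set of left cosets `Bγ`, i.e. `B∖Γ`. -/
abbrev BCoset := Quotient (QuotientGroup.rightRel Bsub)

/-- The summand of the double Eisenstein series `𝓔_{s,k-s}(z,w)`, evaluated on a pair of
cosets `(Bγ, Bδ)` via chosen representatives (it is well defined on such cosets).
All complex powers are principal-branch powers. -/
def dblSummand (k : ℤ) (s w : ℂ) (z : ℂ) (p : BCoset × BCoset) : ℂ :=
  ((cEnt (p.1.out * p.2.out⁻¹) : ℂ)) ^ (w - 1) *
    (jc p.1.out z / jc p.2.out z) ^ (-s) * (jc p.2.out z) ^ (-(k : ℂ))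

def rowOf (p : BCoset) : Fin 2 → ℤ := ![cEnt p.out, p.out.1 1 1]

lemma cEnt_mul_inv (A B : SL2Z) :
    cEnt (A * B⁻¹) = A.1 1 0 * B.1 1 1 - A.1 1 1 * B.1 1 0 := by
  simp [cEnt, Matrix.SpecialLinearGroup.coe_inv, Matrix.adjugate_fin_two, Matrix.SpecialLinearGroup.coe_mul,
    Matrix.mul_apply, Fin.sum_univ_two]
  ring

lemma dEnt_mul_inv (A B : SL2Z) :
    (A * B⁻¹).1 1 1 = -(A.1 1 0 * B.1 0 1) + A.1 1 1 * B.1 0 0 := by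
  simp [Matrix.SpecialLinearGroup.coe_inv, Matrix.adjugate_fin_two, Matrix.SpecialLinearGroup.coe_mul,
    Matrix.mul_apply, Fin.sum_univ_two]

lemma rowOf_ne_zero (p : BCoset) : rowOf p ≠ 0 := by
  intro h
  have h0 : cEnt p.out = 0 := by simpa [rowOf] using congrFun h 0
  have h1 : p.out.1 1 1 = 0 := by simpa [rowOf] using congrFun h 1
  have hdet := p.out.2
  rw [Matrix.det_fin_two] at hdet
  rw [show p.out.1 1 0 = cEnt p.out from rfl, h0, h1] at hdet
  simp at hdet

lemma rowOf_injective : Function.Injective rowOf := by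
  intro p q h
  have h0 : p.out.1 1 0 = q.out.1 1 0 := by simpa [rowOf, cEnt] using congrFun h 0
  have h1 : p.out.1 1 1 = q.out.1 1 1 := by simpa [rowOf] using congrFun h 1
  set g := q.out * p.out⁻¹ with hg
  have hdetp := p.out.2
  rw [Matrix.det_fin_two] at hdetp
  have hg10 : g.1 1 0 = 0 := by
    rw [hg, show (q.out * p.out⁻¹).1 1 0 = cEnt (q.out * p.out⁻¹) from rfl, cEnt_mul_inv, h0, h1]
    ring
  have hg11 : g.1 1 1 = 1 := by
    rw [hg, dEnt_mul_inv, ← h0, ← h1]; linarith [hdetp]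
  have hdetg := g.2
  rw [Matrix.det_fin_two, hg10, hg11] at hdetg
  have hg00 : g.1 0 0 = 1 := by linarith
  have hmem : g ∈ Bsub := by
    refine ⟨g.1 0 1, ?_⟩
    ext i j
    fin_cases i <;> fin_cases j <;>
      simp [ModularGroup.coe_T_zpow, hg00, hg10, hg11]
  have hrel : (QuotientGroup.rightRel Bsub) p.out q.out :=
    QuotientGroup.rightRel_apply.mpr hmem
  calc p = ⟦p.out⟧ := (Quotient.out_eq p).symm
    _ = ⟦q.out⟧ := Quotient.sound hrel
    _ = q := Quotient.out_eq q

lemma abs_entry_le (x : Fin 2 → ℤ) (i : Fin 2) : |((x i : ℤ) : ℝ)| ≤ ‖x‖ := by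
  rw [EisensteinSeries.norm_eq_max_natAbs x]
  have h1 : |((x i : ℤ) : ℝ)| = ((x i).natAbs : ℝ) := by
    rw [Nat.cast_natAbs, Int.cast_abs]
  rw [h1]
  have h2 : (x i).natAbs ≤ max (x 0).natAbs (x 1).natAbs := by
    fin_cases i
    · exact le_max_left _ _
    · exact le_max_right _ _
  exact_mod_cast h2

/-- absolute convergence of the double Eisenstein series
`𝓔_{s,k-s}(z,w)` in the range `2 < Re s < k - 2`, `Re w < Re s - 1`, `Re w < k - 1 - Re s`:
the family of its terms, indexed by the pairs of cosets with `c_{γδ⁻¹} > 0`, is summable. -/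
theorem dblEisenstein_summable (k : ℤ) (hk : Even k) (s w : ℂ)
    (hs1 : 2 < s.re) (hs2 : s.re < (k : ℝ) - 2)
    (hw1 : w.re < s.re - 1) (hw2 : w.re < (k : ℝ) - 1 - s.re)
    (z : ℂ) (hz : 0 < z.im) :
    Summable (fun p : {p : BCoset × BCoset // 0 < cEnt (p.1.out * p.2.out⁻¹)} =>
      dblSummand k s w z p.1) := by
  classical
  set Z : UpperHalfPlane := ⟨z, hz⟩ with hZ
  have hzz : (Z : ℂ) = z := rfl
  set r := EisensteinSeries.r Z with hrdef
  have hrpos : 0 < r := EisensteinSeries.r_pos Z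
  set a : ℝ := max (w.re - 1) 0 with hadef
  have ha : 0 ≤ a := le_max_right _ _
  have hta : a < s.re - 2 := max_lt (by linarith) (by linarith)
  have htb : a < (k : ℝ) - s.re - 2 := max_lt (by linarith) (by linarith)
  set t1 : ℝ := s.re - a with ht1def
  set t2 : ℝ := (k : ℝ) - s.re - a with ht2def
  have ht1 : 2 < t1 := by rw [ht1def]; linarith
  have ht2 : 2 < t2 := by rw [ht2def]; linarith
  set E : ℝ := Real.exp (Real.pi * |s.im|) with hEdef
  have hEpos : 0 < E := Real.exp_pos _
  set C : ℝ := E * (2 ^ a * (r ^ (-s.re) * r ^ (s.re - (k : ℝ)))) with hCdef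
  have hm : ∀ p : BCoset, 0 < ‖rowOf p‖ := fun p => norm_pos_iff.mpr (rowOf_ne_zero p)
  have hJ : ∀ p : BCoset, r * ‖rowOf p‖ ≤ ‖jc p.out z‖ := by
    intro p
    have := EisensteinSeries.r_mul_max_le Z (rowOf_ne_zero p)
    simpa [rowOf, jc, hzz, cEnt] using this
  have hJpos : ∀ p : BCoset, 0 < ‖jc p.out z‖ :=
    fun p => lt_of_lt_of_le (mul_pos hrpos (hm p)) (hJ p)
  have key : ∀ p1 p2 : BCoset, 0 < cEnt (p1.out * p2.out⁻¹) →
      ‖dblSummand k s w z (p1, p2)‖ ≤ C * (‖rowOf p1‖ ^ (-t1) * ‖rowOf p2‖ ^ (-t2)) := by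
    intro p1 p2 hc
    set c : ℤ := cEnt (p1.out * p2.out⁻¹) with hcdef
    set J1 := ‖jc p1.out z‖ with hJ1def
    set J2 := ‖jc p2.out z‖ with hJ2def
    set m1 := ‖rowOf p1‖ with hm1def
    set m2 := ‖rowOf p2‖ with hm2def
    have hm1 : 0 < m1 := hm p1
    have hm2 : 0 < m2 := hm p2
    have hJ1 : r * m1 ≤ J1 := hJ p1
    have hJ2 : r * m2 ≤ J2 := hJ p2
    have hJ1pos : 0 < J1 := hJpos p1
    have hJ2pos : 0 < J2 := hJpos p2
    have hc1 : (1 : ℝ) ≤ (c : ℝ) := by exact_mod_cast hc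
    have hc0 : (0 : ℝ) ≤ (c : ℝ) := by linarith
    have hnorm : ‖dblSummand k s w z (p1, p2)‖ =
        ‖(c : ℂ) ^ (w - 1)‖ *
          ‖(jc p1.out z / jc p2.out z) ^ (-s)‖ *
          ‖(jc p2.out z) ^ (-(k : ℂ))‖ := by
      simp [dblSummand, hcdef]
    have hA : ‖(c : ℂ) ^ (w - 1)‖ = (c : ℝ) ^ (w.re - 1) := by
      have h1 : ((c : ℤ) : ℂ) = ((c : ℝ) : ℂ) := by push_cast; ring
      rw [h1, Complex.norm_cpow_eq_rpow_re_of_pos (by exact_mod_cast hc)]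
      norm_num
    have hB : ‖(jc p1.out z / jc p2.out z) ^ (-s)‖ ≤
        (J1 / J2) ^ (-s.re) * E := by
      refine (Complex.norm_cpow_le _ _).trans ?_
      rw [Complex.neg_re, Complex.neg_im, norm_div, mul_neg, div_eq_mul_inv, ← Real.exp_neg,
        neg_neg, ← hJ1def, ← hJ2def]
      have harg : Complex.arg (jc p1.out z / jc p2.out z) * s.im ≤ Real.pi * |s.im| :=
        calc Complex.arg (jc p1.out z / jc p2.out z) * s.im
            ≤ |Complex.arg (jc p1.out z / jc p2.out z) * s.im| := le_abs_self _
          _ = |Complex.arg (jc p1.out z / jc p2.out z)| * |s.im| := abs_mul _ _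
          _ ≤ Real.pi * |s.im| :=
              mul_le_mul_of_nonneg_right (Complex.abs_arg_le_pi _) (abs_nonneg _)
      exact mul_le_mul_of_nonneg_left (by rw [hEdef]; exact Real.exp_le_exp.mpr harg)
        (Real.rpow_nonneg (div_nonneg hJ1pos.le hJ2pos.le) _)
    have hC3 : ‖(jc p2.out z) ^ (-(k : ℂ))‖ ≤ J2 ^ (-(k : ℝ)) := by
      refine (Complex.norm_cpow_le _ _).trans ?_
      simp [← hJ2def]
    have hsplit : (J1 / J2) ^ (-s.re) = J1 ^ (-s.re) * J2 ^ s.re := by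
      rw [Real.div_rpow hJ1pos.le hJ2pos.le, Real.rpow_neg hJ2pos.le s.re, div_eq_mul_inv, inv_inv]
    have hmerge : J2 ^ s.re * J2 ^ (-(k : ℝ)) = J2 ^ (s.re - (k : ℝ)) := by
      rw [← Real.rpow_add hJ2pos]; ring_nf
    have hcle : (c : ℝ) ≤ 2 * (m1 * m2) := by
      have hceq : c = (rowOf p1 0) * (rowOf p2 1) - (rowOf p1 1) * (rowOf p2 0) := by
        rw [hcdef, cEnt_mul_inv]; rfl
      have e1 := abs_entry_le (rowOf p1) 0
      have e2 := abs_entry_le (rowOf p1) 1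
      have e3 := abs_entry_le (rowOf p2) 0
      have e4 := abs_entry_le (rowOf p2) 1
      rw [← hm1def] at e1 e2
      rw [← hm2def] at e3 e4
      have habs : (c : ℝ) ≤ |((rowOf p1 0 : ℤ) : ℝ)| * |((rowOf p2 1 : ℤ) : ℝ)| +
          |((rowOf p1 1 : ℤ) : ℝ)| * |((rowOf p2 0 : ℤ) : ℝ)| := by
        rw [hceq]
        push_cast
        calc ((rowOf p1 0 : ℝ)) * (rowOf p2 1 : ℝ) - (rowOf p1 1 : ℝ) * (rowOf p2 0 : ℝ)
            ≤ |(rowOf p1 0 : ℝ) * (rowOf p2 1 : ℝ) - (rowOf p1 1 : ℝ) * (rowOf p2 0 : ℝ)| :=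
              le_abs_self _
          _ ≤ |(rowOf p1 0 : ℝ) * (rowOf p2 1 : ℝ)| + |(rowOf p1 1 : ℝ) * (rowOf p2 0 : ℝ)| :=
              abs_sub _ _
          _ = |((rowOf p1 0 : ℤ) : ℝ)| * |((rowOf p2 1 : ℤ) : ℝ)| +
              |((rowOf p1 1 : ℤ) : ℝ)| * |((rowOf p2 0 : ℤ) : ℝ)| := by
              rw [abs_mul, abs_mul]
      nlinarith [abs_nonneg ((rowOf p1 0 : ℤ) : ℝ), abs_nonneg ((rowOf p1 1 : ℤ) : ℝ),
        abs_nonneg ((rowOf p2 0 : ℤ) : ℝ), abs_nonneg ((rowOf p2 1 : ℤ) : ℝ)]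
    have hD : (c : ℝ) ^ (w.re - 1) ≤ 2 ^ a * (m1 ^ a * m2 ^ a) := by
      calc (c : ℝ) ^ (w.re - 1) ≤ (c : ℝ) ^ a :=
            Real.rpow_le_rpow_of_exponent_le hc1 (le_max_left _ _)
        _ ≤ (2 * (m1 * m2)) ^ a := Real.rpow_le_rpow hc0 hcle ha
        _ = 2 ^ a * (m1 ^ a * m2 ^ a) := by
            rw [Real.mul_rpow (by norm_num) (by positivity), Real.mul_rpow hm1.le hm2.le]
    have hE1 : J1 ^ (-s.re) ≤ r ^ (-s.re) * m1 ^ (-s.re) := by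
      rw [← Real.mul_rpow hrpos.le hm1.le]
      exact Real.rpow_le_rpow_of_nonpos (mul_pos hrpos hm1) hJ1 (by linarith)
    have hF1 : J2 ^ (s.re - (k : ℝ)) ≤ r ^ (s.re - (k : ℝ)) * m2 ^ (s.re - (k : ℝ)) := by
      rw [← Real.mul_rpow hrpos.le hm2.le]
      exact Real.rpow_le_rpow_of_nonpos (mul_pos hrpos hm2) hJ2 (by linarith)
    calc ‖dblSummand k s w z (p1, p2)‖
        = ‖(c : ℂ) ^ (w - 1)‖ *
            ‖(jc p1.out z / jc p2.out z) ^ (-s)‖ *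
            ‖(jc p2.out z) ^ (-(k : ℂ))‖ := hnorm
      _ ≤ (c : ℝ) ^ (w.re - 1) * ((J1 / J2) ^ (-s.re) * E) * (J2 ^ (-(k : ℝ))) := by
          rw [hA]
          refine mul_le_mul (mul_le_mul_of_nonneg_left hB (Real.rpow_nonneg hc0 _)) hC3
            (norm_nonneg _) ?_
          exact mul_nonneg (Real.rpow_nonneg hc0 _)
            (mul_nonneg (Real.rpow_nonneg (div_nonneg hJ1pos.le hJ2pos.le) _) hEpos.le)
      _ = E * ((c : ℝ) ^ (w.re - 1) * (J1 ^ (-s.re) * (J2 ^ s.re * J2 ^ (-(k : ℝ))))) := by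
          rw [hsplit]; ring
      _ = E * ((c : ℝ) ^ (w.re - 1) * (J1 ^ (-s.re) * J2 ^ (s.re - (k : ℝ)))) := by
          rw [hmerge]
      _ ≤ E * ((2 ^ a * (m1 ^ a * m2 ^ a)) *
            ((r ^ (-s.re) * m1 ^ (-s.re)) * (r ^ (s.re - (k : ℝ)) * m2 ^ (s.re - (k : ℝ))))) := by
          refine mul_le_mul_of_nonneg_left ?_ hEpos.le
          refine mul_le_mul hD (mul_le_mul hE1 hF1 (Real.rpow_nonneg hJ2pos.le _)
            (mul_nonneg (Real.rpow_nonneg hrpos.le _) (Real.rpow_nonneg hm1.le _))) ?_ ?_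
          · exact mul_nonneg (Real.rpow_nonneg hJ1pos.le _) (Real.rpow_nonneg hJ2pos.le _)
          · exact mul_nonneg (Real.rpow_nonneg (by norm_num) _)
              (mul_nonneg (Real.rpow_nonneg hm1.le _) (Real.rpow_nonneg hm2.le _))
      _ = C * (m1 ^ (-t1) * m2 ^ (-t2)) := by
          have e1 : m1 ^ a * m1 ^ (-s.re) = m1 ^ (-t1) := by
            rw [← Real.rpow_add hm1]; congr 1; rw [ht1def]; ring
          have e2 : m2 ^ a * m2 ^ (s.re - (k : ℝ)) = m2 ^ (-t2) := by
            rw [← Real.rpow_add hm2]; congr 1; rw [ht2def]; ring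
          rw [hCdef, ← e1, ← e2]; ring
  have hsum : Summable (fun q : BCoset × BCoset =>
      C * (‖rowOf q.1‖ ^ (-t1) * ‖rowOf q.2‖ ^ (-t2))) := by
    have h1 : Summable fun p : BCoset => ‖rowOf p‖ ^ (-t1) :=
      (EisensteinSeries.summable_one_div_norm_rpow ht1).comp_injective rowOf_injective
    have h2 : Summable fun p : BCoset => ‖rowOf p‖ ^ (-t2) :=
      (EisensteinSeries.summable_one_div_norm_rpow ht2).comp_injective rowOf_injective
    exact (h1.mul_of_nonneg h2 (fun p => Real.rpow_nonneg (norm_nonneg _) _)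
      (fun p => Real.rpow_nonneg (norm_nonneg _) _)).mul_left C
  apply Summable.of_norm
  exact Summable.of_nonneg_of_le (fun _ => norm_nonneg _)
    (fun p => key p.1.1 p.1.2 p.2) (hsum.comp_injective Subtype.val_injective)


end
end

section
/- Let k, r, l be integers with r ≥ 1 and l ≥ 1. Then there exists S₀ ∈ ℝ such that for all s ∈ ℂ with Re(s) > S₀, all series below converge absolutely and D_l(k+r−2, −r−2; s) = ζ(3+r) · Σ_{m=1}^∞ m^{−3−r} Σ_{x mod m, gcd(x,m)=1} e^{−2πixl/m} · E_l(s, k+r−2; x/m), where the inner sum runs over residues x modulo m coprime to m and ζ is the Riemann zeta function. -/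
open Complex
open scoped Real

noncomputable section

/-- The divisor sum `σ_w(n) = Σ_{d ∣ n} d^w` with complex exponent. -/
def sigmaC (w : ℂ) (n : ℕ) : ℂ := ∑ d ∈ n.divisors, (d : ℂ) ^ w

/-- The `n`-th term (indexed so that `n : ℕ` corresponds to the summation index `n + h + 1`)
of the shifted convolution series `D_h(α, β; s) = Σ_{n > h} σ_α(n) σ_β(n-h) n^{-s}`. -/
def DshiftTerm (h : ℕ) (α β s : ℂ) (n : ℕ) : ℂ :=
  sigmaC α (n + h + 1) * sigmaC β (n + 1) / ((n + h + 1 : ℕ) : ℂ) ^ s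

/-- The shifted convolution series `D_h(α, β; s) = Σ_{n > h} σ_α(n) σ_β(n-h) n^{-s}`. -/
def Dshift (h : ℕ) (α β s : ℂ) : ℂ := ∑' n : ℕ, DshiftTerm h α β s n

/-- The `n`-th term (the summation index being `n + l + 1`) of the truncated Estermann zeta
function `E_l(s, α; x/m) = Σ_{n > l} σ_α(n) e^{2πixn/m} n^{-s}`. -/
def estermannTerm (l : ℕ) (s α : ℂ) (x : ℕ) (m : ℕ) (n : ℕ) : ℂ :=
  sigmaC α (n + l + 1) * Complex.exp (2 * (π : ℂ) * I * x * ((n + l + 1 : ℕ) : ℂ) / m) /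
    ((n + l + 1 : ℕ) : ℂ) ^ s

/-- The truncated Estermann zeta function `E_l(s, α; x/m) = Σ_{n > l} σ_α(n) e^{2πixn/m} n^{-s}`. -/
def estermann (l : ℕ) (s α : ℂ) (x : ℕ) (m : ℕ) : ℂ := ∑' n : ℕ, estermannTerm l s α x m n

/-! ### Auxiliary material: Ramanujan sums -/

/-- Ramanujan sum `c_m(q)`. -/
def ram (m q : ℕ) : ℂ :=
  ∑ x ∈ (Finset.range m).filter (fun x => Nat.gcd x m = 1),
    Complex.exp (2 * (π : ℂ) * I * x * q / m)

lemma sum_exp_range (m q : ℕ) (hm : m ≠ 0) :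
    ∑ y ∈ Finset.range m, Complex.exp (2 * (π : ℂ) * I * y * q / m)
      = if m ∣ q then (m : ℂ) else 0 := by
  have hm' : (m : ℂ) ≠ 0 := Nat.cast_ne_zero.mpr hm
  have hrw : ∀ y : ℕ, Complex.exp (2 * (π : ℂ) * I * y * q / m)
      = Complex.exp (2 * (π : ℂ) * I * q / m) ^ y := by
    intro y
    rw [← Complex.exp_nat_mul]
    congr 1
    ring
  simp_rw [hrw]
  by_cases hdvd : m ∣ q
  · obtain ⟨c, rfl⟩ := hdvd
    have h1 : Complex.exp (2 * (π : ℂ) * I * (↑(m * c)) / m) = 1 := by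
      have harg : (2 * (π : ℂ) * I * (↑(m * c)) / m) = (c : ℂ) * (2 * π * I) := by
        push_cast
        field_simp
      rw [harg, Complex.exp_nat_mul_two_pi_mul_I]
    rw [h1]
    simp
  · have hne : Complex.exp (2 * (π : ℂ) * I * q / m) ≠ 1 := by
      intro h
      obtain ⟨n, hn⟩ := Complex.exp_eq_one_iff.mp h
      have h2 : (q : ℂ) = (n : ℂ) * m := by
        have hpi : (π : ℂ) ≠ 0 := by exact_mod_cast Real.pi_ne_zero
        have h2pi : (2 * (π : ℂ) * I) ≠ 0 := by
          simp [hpi, Complex.I_ne_zero]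
        field_simp at hn
        apply mul_left_cancel₀ h2pi
        linear_combination (2 * (π : ℂ) * I) * hn
      have h3 : (q : ℤ) = n * m := by exact_mod_cast h2
      exact hdvd (Int.natCast_dvd_natCast.mp ⟨n, by rw [h3]; ring⟩)
    rw [geom_sum_eq hne]
    have hpow : Complex.exp (2 * (π : ℂ) * I * q / m) ^ m = 1 := by
      rw [← Complex.exp_nat_mul]
      have harg : (m : ℂ) * (2 * (π : ℂ) * I * q / m) = (q : ℂ) * (2 * π * I) := by
        field_simp
      rw [harg, Complex.exp_nat_mul_two_pi_mul_I]
    rw [hpow]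
    simp [hdvd]

lemma ram_fiber (m q g : ℕ) (hm : m ≠ 0) (hg : g ∈ m.divisors) :
    ram (m / g) q =
      ∑ y ∈ (Finset.range m).filter (fun y => Nat.gcd m y = g),
        Complex.exp (2 * (π : ℂ) * I * y * q / m) := by
  obtain ⟨hgdvd, -⟩ := Nat.mem_divisors.mp hg
  have hgpos : 0 < g := Nat.pos_of_mem_divisors hg
  have hmg : g * (m / g) = m := Nat.mul_div_cancel' hgdvd
  have hmgpos : 0 < m / g := Nat.div_pos (Nat.le_of_dvd (Nat.pos_of_ne_zero hm) hgdvd) hgpos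
  refine Finset.sum_nbij' (fun x => g * x) (fun y => y / g) ?_ ?_ ?_ ?_ ?_
  · intro x hx
    rw [Finset.mem_filter, Finset.mem_range] at hx ⊢
    obtain ⟨hx1, hx2⟩ := hx
    constructor
    · calc g * x < g * (m / g) := by
            exact (Nat.mul_lt_mul_left hgpos).mpr hx1
        _ = m := hmg
    · rw [← hmg, Nat.gcd_mul_left, Nat.gcd_comm, hx2, mul_one]
  · intro y hy
    rw [Finset.mem_filter, Finset.mem_range] at hy ⊢
    obtain ⟨hy1, hy2⟩ := hy
    have hgy : g ∣ y := hy2 ▸ Nat.gcd_dvd_right m y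
    constructor
    · exact Nat.div_lt_div_of_lt_of_dvd hgdvd hy1
    · have := Nat.coprime_div_gcd_div_gcd (m := m) (n := y) (hy2 ▸ hgpos)
      rw [hy2] at this
      exact Nat.Coprime.gcd_eq_one (Nat.Coprime.symm this) |>.symm ▸ rfl
  · intro x hx
    exact Nat.mul_div_cancel_left x hgpos
  · intro y hy
    rw [Finset.mem_filter] at hy
    exact Nat.mul_div_cancel' (hy.2 ▸ Nat.gcd_dvd_right m y)
  · intro x hx
    congr 1
    have hc : (m : ℂ) = (g : ℂ) * ((m / g : ℕ) : ℂ) := by exact_mod_cast hmg.symm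
    have hg0 : ((g : ℕ) : ℂ) ≠ 0 := Nat.cast_ne_zero.mpr hgpos.ne'
    have hmg0 : ((m / g : ℕ) : ℂ) ≠ 0 := Nat.cast_ne_zero.mpr hmgpos.ne'
    rw [hc]
    push_cast
    field_simp

lemma sum_ram_divisors (m q : ℕ) (hm : m ≠ 0) :
    ∑ d ∈ m.divisors, ram d q = if m ∣ q then (m : ℂ) else 0 := by
  rw [← sum_exp_range m q hm, ← Nat.sum_div_divisors m (fun d => ram d q)]
  conv_rhs => rw [← Finset.sum_fiberwise_of_maps_to
    (g := fun y => Nat.gcd m y) (t := m.divisors)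
    (fun y _ => Nat.mem_divisors.mpr ⟨Nat.gcd_dvd_left m y, hm⟩)
    (fun y => Complex.exp (2 * (π : ℂ) * I * y * q / m))]
  exact Finset.sum_congr rfl fun g hg => ram_fiber m q g hm hg

/-! ### Norm estimates -/

lemma card_divisors_le (n : ℕ) : n.divisors.card ≤ n := by
  have h : n.divisors ⊆ Finset.Ico 1 (n + 1) := Finset.filter_subset _ _
  calc n.divisors.card ≤ (Finset.Ico 1 (n + 1)).card := Finset.card_le_card h
    _ = n := by rw [Nat.card_Ico]; omega

lemma sigmaC_norm_le (w : ℂ) (n : ℕ) (hn : n ≠ 0) :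
    ‖sigmaC w n‖ ≤ (n : ℝ) ^ (|w.re| + 1) := by
  have hn1 : (1 : ℝ) ≤ (n : ℝ) := by exact_mod_cast Nat.one_le_iff_ne_zero.mpr hn
  have h1 : ∀ d ∈ n.divisors, ‖(d : ℂ) ^ w‖ ≤ (n : ℝ) ^ |w.re| := by
    intro d hd
    have hdpos : 0 < d := Nat.pos_of_mem_divisors hd
    have hdn : d ≤ n := Nat.le_of_dvd (Nat.pos_of_ne_zero hn) (Nat.dvd_of_mem_divisors hd)
    rw [Complex.norm_natCast_cpow_of_pos hdpos]
    rcases le_or_gt 0 w.re with h | h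
    · calc (d : ℝ) ^ w.re ≤ (n : ℝ) ^ w.re :=
            Real.rpow_le_rpow (by positivity) (by exact_mod_cast hdn) h
        _ ≤ (n : ℝ) ^ |w.re| := Real.rpow_le_rpow_of_exponent_le hn1 (le_abs_self _)
    · calc (d : ℝ) ^ w.re ≤ 1 :=
            Real.rpow_le_one_of_one_le_of_nonpos (by exact_mod_cast hdpos) h.le
        _ = (n : ℝ) ^ (0 : ℝ) := (Real.rpow_zero _).symm
        _ ≤ (n : ℝ) ^ |w.re| := Real.rpow_le_rpow_of_exponent_le hn1 (abs_nonneg _)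
  calc ‖sigmaC w n‖ ≤ ∑ d ∈ n.divisors, ‖(d : ℂ) ^ w‖ := norm_sum_le _ _
    _ ≤ ∑ _d ∈ n.divisors, (n : ℝ) ^ |w.re| := Finset.sum_le_sum h1
    _ = n.divisors.card * (n : ℝ) ^ |w.re| := by rw [Finset.sum_const, nsmul_eq_mul]
    _ ≤ (n : ℝ) * (n : ℝ) ^ |w.re| := by
        have h2 := card_divisors_le n
        have hp : (0 : ℝ) ≤ (n : ℝ) ^ |w.re| := by positivity
        exact mul_le_mul_of_nonneg_right (by exact_mod_cast h2) hp
    _ = (n : ℝ) ^ (|w.re| + 1) := by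
        rw [Real.rpow_add (by linarith), Real.rpow_one]; ring

/-- Comparison bound: `N ^ t ≤ ((n+1)^2)⁻¹` when `n + 1 ≤ N` and `t ≤ -2`. -/
lemma rpow_le_inv_sq {N n : ℕ} {t : ℝ} (hN : n + 1 ≤ N) (ht : t ≤ -2) :
    (N : ℝ) ^ t ≤ (((n : ℝ) + 1) ^ 2)⁻¹ := by
  have hN' : 1 ≤ N := by omega
  have hN1 : (1 : ℝ) ≤ (N : ℝ) := by exact_mod_cast hN'
  have h1 : (N : ℝ) ^ t ≤ (N : ℝ) ^ (-2 : ℝ) := Real.rpow_le_rpow_of_exponent_le hN1 ht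
  have h2 : (N : ℝ) ^ (-2 : ℝ) = ((N : ℝ) ^ (2 : ℕ))⁻¹ := by
    rw [Real.rpow_neg (by linarith)]
    norm_num
  have h3 : ((n : ℝ) + 1) ^ 2 ≤ (N : ℝ) ^ 2 := by
    have : (n : ℝ) + 1 ≤ (N : ℝ) := by exact_mod_cast hN
    nlinarith
  calc (N : ℝ) ^ t ≤ ((N : ℝ) ^ (2 : ℕ))⁻¹ := h2 ▸ h1
    _ ≤ (((n : ℝ) + 1) ^ 2)⁻¹ := by
        apply inv_anti₀ (by positivity) h3

lemma summable_inv_sq : Summable (fun n : ℕ => (((n : ℝ) + 1) ^ 2)⁻¹) := by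
  have h := Real.summable_one_div_nat_pow.mpr (le_refl 2)
  have h2 := (summable_nat_add_iff 1).mpr h
  refine h2.congr fun n => ?_
  push_cast
  rw [one_div]

lemma ram_norm_le (m q : ℕ) : ‖ram m q‖ ≤ (m : ℝ) := by
  have h1 : ∀ x ∈ (Finset.range m).filter (fun x => Nat.gcd x m = 1),
      ‖Complex.exp (2 * (π : ℂ) * I * x * q / m)‖ ≤ 1 := by
    intro x _
    have harg : 2 * (π : ℂ) * I * x * q / m = ((2 * π * x * q / m : ℝ) : ℂ) * I := by
      push_cast; ring
    rw [harg]
    exact le_of_eq (Complex.norm_exp_ofReal_mul_I _)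
  calc ‖ram m q‖ ≤ ∑ x ∈ (Finset.range m).filter (fun x => Nat.gcd x m = 1),
        ‖Complex.exp (2 * (π : ℂ) * I * x * q / m)‖ := norm_sum_le _ _
    _ ≤ ∑ _x ∈ (Finset.range m).filter (fun x => Nat.gcd x m = 1), (1 : ℝ) :=
        Finset.sum_le_sum h1
    _ = ((Finset.range m).filter (fun x => Nat.gcd x m = 1)).card := by
        rw [Finset.sum_const]; simp
    _ ≤ ((Finset.range m).card : ℝ) := by
        exact_mod_cast Finset.card_le_card (Finset.filter_subset _ _)
    _ = m := by rw [Finset.card_range]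

lemma lseries_ram_summable (r q : ℕ) : LSeriesSummable (fun m => ram m q) (3 + (r : ℂ)) := by
  rw [LSeriesSummable]
  have hs₀re : ((3 : ℂ) + (r : ℂ)).re = 3 + r := by simp
  apply Summable.of_norm_bounded (g := fun n : ℕ => ((n : ℝ)) ^ (-2 : ℝ))
    (Real.summable_nat_rpow.mpr (by norm_num))
  intro n
  rcases eq_or_ne n 0 with rfl | hn
  · simp [LSeries.term_zero, Real.zero_rpow (by norm_num : (-2 : ℝ) ≠ 0)]
  · have hnpos : 0 < n := Nat.pos_of_ne_zero hn
    have hn1 : (1 : ℝ) ≤ (n : ℝ) := by exact_mod_cast hnpos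
    rw [LSeries.term_of_ne_zero hn, norm_div, Complex.norm_natCast_cpow_of_pos hnpos, hs₀re]
    rw [div_le_iff₀ (by positivity)]
    calc ‖ram n q‖ ≤ (n : ℝ) := ram_norm_le n q
      _ = (n : ℝ) ^ (1 : ℝ) := (Real.rpow_one _).symm
      _ ≤ (n : ℝ) ^ (1 + (r : ℝ)) :=
          Real.rpow_le_rpow_of_exponent_le hn1 (by norm_num [Nat.cast_nonneg])
      _ = (n : ℝ) ^ (-2 : ℝ) * (n : ℝ) ^ ((3 : ℝ) + r) := by
          rw [← Real.rpow_add (by positivity)]; ring_nf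

open scoped LSeries.notation in
lemma sigmaC_eq_zeta_mul (r q : ℕ) (hq : q ≠ 0) :
    sigmaC (-(r : ℂ) - 2) q =
      riemannZeta (3 + (r : ℂ)) *
        ∑' m : ℕ, ((m + 1 : ℕ) : ℂ) ^ (-3 - (r : ℤ)) * ram (m + 1) q := by
  have h1 : (1 : ℝ) < ((3 : ℂ) + (r : ℂ)).re := by
    simp only [Complex.add_re, Complex.natCast_re]
    have : (0 : ℝ) ≤ (r : ℝ) := Nat.cast_nonneg r
    norm_num
    linarith
  have hone : LSeriesSummable 1 (3 + (r : ℂ)) := LSeriesSummable_one_iff.mpr h1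
  have hg : LSeriesSummable (fun m => ram m q) (3 + (r : ℂ)) := lseries_ram_summable r q
  have hconv := LSeries_convolution' hone hg
  rw [LSeries_one_eq_riemannZeta h1] at hconv
  have hL : LSeries ((1 : ℕ → ℂ) ⍟ (fun m => ram m q)) (3 + (r : ℂ))
      = sigmaC (-(r : ℂ) - 2) q := by
    have hterm : ∀ n : ℕ, LSeries.term ((1 : ℕ → ℂ) ⍟ (fun m => ram m q)) (3 + (r : ℂ)) n
        = if n ∈ q.divisors then (n : ℂ) ^ (-(r : ℂ) - 2) else 0 := by
      intro n
      rcases eq_or_ne n 0 with rfl | hn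
      · simp [LSeries.term_zero, Nat.divisors_zero]
      · have hcv : ((1 : ℕ → ℂ) ⍟ (fun m => ram m q)) n = if n ∣ q then (n : ℂ) else 0 := by
          rw [LSeries.convolution_def]
          simp only [Pi.one_apply, one_mul]
          rw [Nat.sum_divisorsAntidiagonal (f := fun _ j => ram j q)]
          rw [Nat.sum_div_divisors n (fun d => ram d q)]
          exact sum_ram_divisors n q hn
        rw [LSeries.term_of_ne_zero hn, hcv]
        have hn0 : ((n : ℕ) : ℂ) ≠ 0 := Nat.cast_ne_zero.mpr hn
        by_cases hd : n ∣ q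
        · rw [if_pos hd, if_pos (Nat.mem_divisors.mpr ⟨hd, hq⟩)]
          rw [show (-(r : ℂ) - 2) = 1 - (3 + (r : ℂ)) by ring, Complex.cpow_sub _ _ hn0,
            Complex.cpow_one]
        · rw [if_neg hd, if_neg (fun hmem => hd (Nat.dvd_of_mem_divisors hmem)), zero_div]
    rw [LSeries, tsum_congr hterm, tsum_eq_sum (s := q.divisors) (fun n hn => if_neg hn),
      sigmaC]
    exact Finset.sum_congr rfl fun n hn => if_pos hn
  have hR : LSeries (fun m => ram m q) (3 + (r : ℂ))
      = ∑' m : ℕ, ((m + 1 : ℕ) : ℂ) ^ (-3 - (r : ℤ)) * ram (m + 1) q := by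
    rw [LSeries, Summable.tsum_eq_zero_add hg, LSeries.term_zero, zero_add]
    apply tsum_congr
    intro m
    rw [LSeries.term_of_ne_zero (Nat.succ_ne_zero m)]
    rw [show ((m + 1 : ℕ) : ℂ) ^ (-3 - (r : ℤ)) = ((m + 1 : ℕ) : ℂ) ^ ((-3 - (r : ℤ) : ℤ) : ℂ)
      from (Complex.cpow_intCast _ _).symm]
    push_cast
    rw [show (-3 - (r : ℂ)) = -(3 + (r : ℂ)) by ring, Complex.cpow_neg]
    rw [div_eq_mul_inv, mul_comm]
  rw [hL, hR] at hconv
  exact hconv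


set_option maxHeartbeats 1000000 in
/-- for `Re s` large enough,
`D_l(k+r-2, -r-2; s) = ζ(3+r) Σ_{m≥1} m^{-3-r} Σ_{x mod m, (x,m)=1} e^{-2πixl/m}
E_l(s, k+r-2; x/m)`, all series converging absolutely. -/
theorem Dshift_eq_estermann_expansion (k : ℤ) (r l : ℕ) (hr : 1 ≤ r) (hl : 1 ≤ l) :
    ∃ S₀ : ℝ, ∀ s : ℂ, S₀ < s.re →
      Summable (DshiftTerm l ((k : ℂ) + r - 2) (-(r : ℂ) - 2) s) ∧
      (∀ m : ℕ, 1 ≤ m → ∀ x : ℕ, Summable (estermannTerm l s ((k : ℂ) + r - 2) x m)) ∧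
      Summable (fun m : ℕ => ((m + 1 : ℕ) : ℂ) ^ (-3 - (r : ℤ)) *
        ∑ x ∈ (Finset.range (m + 1)).filter (fun x => Nat.gcd x (m + 1) = 1),
          Complex.exp (-2 * (π : ℂ) * I * x * l / ((m + 1 : ℕ) : ℂ)) *
            estermann l s ((k : ℂ) + r - 2) x (m + 1)) ∧
      Dshift l ((k : ℂ) + r - 2) (-(r : ℂ) - 2) s =
        riemannZeta (3 + (r : ℂ)) * ∑' m : ℕ, ((m + 1 : ℕ) : ℂ) ^ (-3 - (r : ℤ)) *
          ∑ x ∈ (Finset.range (m + 1)).filter (fun x => Nat.gcd x (m + 1) = 1),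
            Complex.exp (-2 * (π : ℂ) * I * x * l / ((m + 1 : ℕ) : ℂ)) *
              estermann l s ((k : ℂ) + r - 2) x (m + 1) := by
  classical
  set α : ℂ := (k : ℂ) + r - 2 with hα
  set B : ℝ := ‖α‖ with hB
  have hrnn : (0 : ℝ) ≤ (r : ℝ) := Nat.cast_nonneg r
  refine ⟨B + r + 10, ?_⟩
  intro s hs
  have hBnn : 0 ≤ B := norm_nonneg _
  have habsre : |α.re| ≤ B := Complex.abs_re_le_norm α
  -- norm bound for `sigmaC α`
  have hσα : ∀ N : ℕ, N ≠ 0 → ‖sigmaC α N‖ ≤ (N : ℝ) ^ (B + 1) := by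
    intro N hN
    have h1 : (1 : ℝ) ≤ (N : ℝ) := by exact_mod_cast Nat.one_le_iff_ne_zero.mpr hN
    calc ‖sigmaC α N‖ ≤ (N : ℝ) ^ (|α.re| + 1) := sigmaC_norm_le α N hN
      _ ≤ (N : ℝ) ^ (B + 1) := Real.rpow_le_rpow_of_exponent_le h1 (by linarith)
  -- norm bound for `sigmaC β`
  have hβre : |(-(r : ℂ) - 2).re| + 1 = (r : ℝ) + 3 := by
    have h1 : (-(r : ℂ) - 2).re = -(r : ℝ) - 2 := by simp
    rw [h1, abs_of_nonpos (by linarith)]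
    ring
  have hσβ : ∀ q : ℕ, q ≠ 0 → ‖sigmaC (-(r : ℂ) - 2) q‖ ≤ (q : ℝ) ^ ((r : ℝ) + 3) := by
    intro q hq
    have := sigmaC_norm_le (-(r : ℂ) - 2) q hq
    rwa [hβre] at this
  -- the estermann term bound
  have hEstBound : ∀ x M n : ℕ, ‖estermannTerm l s α x M n‖ ≤ (((n : ℝ) + 1) ^ 2)⁻¹ := by
    intro x M n
    have hNpos : 0 < n + l + 1 := by omega
    have hNpos' : (0 : ℝ) < ((n + l + 1 : ℕ) : ℝ) := by exact_mod_cast hNpos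
    have hexp1 : ‖Complex.exp (2 * (π : ℂ) * I * x * ((n + l + 1 : ℕ) : ℂ) / M)‖ = 1 := by
      rw [show (2 * (π : ℂ) * I * x * ((n + l + 1 : ℕ) : ℂ) / M)
          = ((2 * π * x * (n + l + 1) / M : ℝ) : ℂ) * I by push_cast; ring]
      exact Complex.norm_exp_ofReal_mul_I _
    rw [estermannTerm, norm_div, norm_mul, hexp1, mul_one,
      Complex.norm_natCast_cpow_of_pos hNpos]
    calc ‖sigmaC α (n + l + 1)‖ / ((n + l + 1 : ℕ) : ℝ) ^ s.re
        ≤ ((n + l + 1 : ℕ) : ℝ) ^ (B + 1) / ((n + l + 1 : ℕ) : ℝ) ^ s.re := by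
          gcongr
          exact hσα _ (by omega)
      _ = ((n + l + 1 : ℕ) : ℝ) ^ (B + 1 - s.re) := by
          rw [← Real.rpow_sub hNpos']
      _ ≤ (((n : ℝ) + 1) ^ 2)⁻¹ := rpow_le_inv_sq (by omega) (by linarith)
  have hEstSummable : ∀ x M : ℕ, Summable (estermannTerm l s α x M) := by
    intro x M
    exact Summable.of_norm_bounded summable_inv_sq (hEstBound x M)
  -- uniform bound on the estermann functions
  set C : ℝ := ∑' n : ℕ, (((n : ℝ) + 1) ^ 2)⁻¹ with hC
  have hCnn : 0 ≤ C := tsum_nonneg fun n => by positivity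
  have hEstNormSummable : ∀ x M : ℕ, Summable (fun n => ‖estermannTerm l s α x M n‖) := by
    intro x M
    exact Summable.of_nonneg_of_le (fun n => norm_nonneg _) (hEstBound x M) summable_inv_sq
  have hEstNorm : ∀ x M : ℕ, ‖estermann l s α x M‖ ≤ C := by
    intro x M
    calc ‖estermann l s α x M‖ ≤ ∑' n, ‖estermannTerm l s α x M n‖ :=
          norm_tsum_le_tsum_norm (hEstNormSummable x M)
      _ ≤ C := Summable.tsum_le_tsum (hEstBound x M) (hEstNormSummable x M) summable_inv_sq
  -- Part 1 : summability of the Dirichlet series terms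
  have hD : Summable (DshiftTerm l α (-(r : ℂ) - 2) s) := by
    apply Summable.of_norm_bounded summable_inv_sq
    intro n
    have hNpos : 0 < n + l + 1 := by omega
    have hNpos' : (0 : ℝ) < ((n + l + 1 : ℕ) : ℝ) := by exact_mod_cast hNpos
    rw [DshiftTerm, norm_div, norm_mul, Complex.norm_natCast_cpow_of_pos hNpos]
    calc ‖sigmaC α (n + l + 1)‖ * ‖sigmaC (-(r : ℂ) - 2) (n + 1)‖ / ((n + l + 1 : ℕ) : ℝ) ^ s.re
        ≤ ((n + l + 1 : ℕ) : ℝ) ^ (B + 1) * ((n + l + 1 : ℕ) : ℝ) ^ ((r : ℝ) + 3) /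
            ((n + l + 1 : ℕ) : ℝ) ^ s.re := by
          gcongr
          · exact hσα _ (by omega)
          · calc ‖sigmaC (-(r : ℂ) - 2) (n + 1)‖ ≤ ((n + 1 : ℕ) : ℝ) ^ ((r : ℝ) + 3) :=
                  hσβ _ (by omega)
              _ ≤ ((n + l + 1 : ℕ) : ℝ) ^ ((r : ℝ) + 3) :=
                  Real.rpow_le_rpow (by positivity) (by exact_mod_cast by omega) (by linarith)
      _ = ((n + l + 1 : ℕ) : ℝ) ^ (B + 1 + ((r : ℝ) + 3) - s.re) := by
          rw [← Real.rpow_add hNpos', ← Real.rpow_sub hNpos']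
      _ ≤ (((n : ℝ) + 1) ^ 2)⁻¹ := rpow_le_inv_sq (by omega) (by linarith)
  -- the Ramanujan expansion of `σ_β`
  have hσβ_exp : ∀ n : ℕ, sigmaC (-(r : ℂ) - 2) (n + 1)
      = riemannZeta (3 + (r : ℂ)) *
          ∑' m : ℕ, ((m + 1 : ℕ) : ℂ) ^ (-3 - (r : ℤ)) * ram (m + 1) (n + 1) :=
    fun n => sigmaC_eq_zeta_mul r (n + 1) (Nat.succ_ne_zero n)
  -- the double-sum function and its summability
  set G : ℕ × ℕ → ℂ := fun p =>
    (((p.2 + 1 : ℕ) : ℂ) ^ (-3 - (r : ℤ)) * ram (p.2 + 1) (p.1 + 1)) *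
      (sigmaC α (p.1 + l + 1) / ((p.1 + l + 1 : ℕ) : ℂ) ^ s) with hG
  -- handy zpow → rpow norm computation
  have hzpow : ∀ m : ℕ, ‖((m + 1 : ℕ) : ℂ) ^ (-3 - (r : ℤ))‖
      = ((m + 1 : ℕ) : ℝ) ^ ((-3 : ℝ) - r) := by
    intro m
    have hpos : (0 : ℝ) < ((m + 1 : ℕ) : ℝ) := by positivity
    rw [norm_zpow]
    rw [show ‖((m + 1 : ℕ) : ℂ)‖ = ((m + 1 : ℕ) : ℝ) from Complex.norm_natCast _]
    rw [show ((-3 : ℝ) - r) = (((-3 - (r : ℤ)) : ℤ) : ℝ) by push_cast; ring]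
    rw [Real.rpow_intCast]
  have hzpow_mul : ∀ m : ℕ, ((m + 1 : ℕ) : ℝ) ^ ((-3 : ℝ) - r) * ((m + 1 : ℕ) : ℝ)
      ≤ (((m : ℝ) + 1) ^ 2)⁻¹ := by
    intro m
    have hpos : (0 : ℝ) < ((m + 1 : ℕ) : ℝ) := by positivity
    have h1 : ((m + 1 : ℕ) : ℝ) ^ ((-3 : ℝ) - r) * ((m + 1 : ℕ) : ℝ)
        = ((m + 1 : ℕ) : ℝ) ^ ((-3 : ℝ) - r + 1) := by
      rw [Real.rpow_add hpos, Real.rpow_one]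
    rw [h1]
    exact rpow_le_inv_sq (le_refl (m + 1)) (by linarith)
  have hGbound : ∀ p : ℕ × ℕ,
      ‖G p‖ ≤ (((p.1 : ℝ) + 1) ^ 2)⁻¹ * (((p.2 : ℝ) + 1) ^ 2)⁻¹ := by
    rintro ⟨n, m⟩
    have hNpos : 0 < n + l + 1 := by omega
    have hNpos' : (0 : ℝ) < ((n + l + 1 : ℕ) : ℝ) := by exact_mod_cast hNpos
    have hMpos : (0 : ℝ) < ((m + 1 : ℕ) : ℝ) := by positivity
    have h2 : ‖sigmaC α (n + l + 1) / ((n + l + 1 : ℕ) : ℂ) ^ s‖ ≤ (((n : ℝ) + 1) ^ 2)⁻¹ := by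
      rw [norm_div, Complex.norm_natCast_cpow_of_pos hNpos]
      calc ‖sigmaC α (n + l + 1)‖ / ((n + l + 1 : ℕ) : ℝ) ^ s.re
          ≤ ((n + l + 1 : ℕ) : ℝ) ^ (B + 1) / ((n + l + 1 : ℕ) : ℝ) ^ s.re := by
            gcongr
            exact hσα _ (by omega)
        _ = ((n + l + 1 : ℕ) : ℝ) ^ (B + 1 - s.re) := by rw [← Real.rpow_sub hNpos']
        _ ≤ (((n : ℝ) + 1) ^ 2)⁻¹ := rpow_le_inv_sq (by omega) (by linarith)
    calc ‖G (n, m)‖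
        = ‖((m + 1 : ℕ) : ℂ) ^ (-3 - (r : ℤ))‖ * ‖ram (m + 1) (n + 1)‖ *
            ‖sigmaC α (n + l + 1) / ((n + l + 1 : ℕ) : ℂ) ^ s‖ := by
          rw [hG]; simp only [norm_mul]
      _ ≤ (((m + 1 : ℕ) : ℝ) ^ ((-3 : ℝ) - r) * ((m + 1 : ℕ) : ℝ)) * (((n : ℝ) + 1) ^ 2)⁻¹ := by
          rw [hzpow m]
          apply mul_le_mul _ h2 (norm_nonneg _) (by positivity)
          exact mul_le_mul_of_nonneg_left (ram_norm_le (m + 1) (n + 1)) (by positivity)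
      _ ≤ (((m : ℝ) + 1) ^ 2)⁻¹ * (((n : ℝ) + 1) ^ 2)⁻¹ := by
          apply mul_le_mul_of_nonneg_right (hzpow_mul m) (by positivity)
      _ = (((n : ℝ) + 1) ^ 2)⁻¹ * (((m : ℝ) + 1) ^ 2)⁻¹ := by ring
  have hfg : Summable (fun p : ℕ × ℕ => (((p.1 : ℝ) + 1) ^ 2)⁻¹ * (((p.2 : ℝ) + 1) ^ 2)⁻¹) := by
    apply Summable.mul_of_nonneg summable_inv_sq summable_inv_sq
    · intro n; positivity
    · intro n; positivity
  have hGsum : Summable G := Summable.of_norm_bounded hfg hGbound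
  -- Part 3 : summability over `m`
  have hCoefNorm : ∀ m x : ℕ,
      ‖Complex.exp (-2 * (π : ℂ) * I * x * l / ((m + 1 : ℕ) : ℂ))‖ = 1 := by
    intro m x
    rw [show (-2 * (π : ℂ) * I * x * l / ((m + 1 : ℕ) : ℂ))
        = ((-(2 * π * x * l / (m + 1)) : ℝ) : ℂ) * I by push_cast; ring]
    exact Complex.norm_exp_ofReal_mul_I _
  have hPart3 : Summable (fun m : ℕ => ((m + 1 : ℕ) : ℂ) ^ (-3 - (r : ℤ)) *
      ∑ x ∈ (Finset.range (m + 1)).filter (fun x => Nat.gcd x (m + 1) = 1),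
        Complex.exp (-2 * (π : ℂ) * I * x * l / ((m + 1 : ℕ) : ℂ)) *
          estermann l s α x (m + 1)) := by
    apply Summable.of_norm_bounded (g := fun m : ℕ => C * (((m : ℝ) + 1) ^ 2)⁻¹)
      (summable_inv_sq.mul_left C)
    intro m
    rw [norm_mul, hzpow m]
    have hsum_bound : ‖∑ x ∈ (Finset.range (m + 1)).filter (fun x => Nat.gcd x (m + 1) = 1),
        Complex.exp (-2 * (π : ℂ) * I * x * l / ((m + 1 : ℕ) : ℂ)) *
          estermann l s α x (m + 1)‖ ≤ ((m + 1 : ℕ) : ℝ) * C := by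
      calc ‖∑ x ∈ (Finset.range (m + 1)).filter (fun x => Nat.gcd x (m + 1) = 1),
          Complex.exp (-2 * (π : ℂ) * I * x * l / ((m + 1 : ℕ) : ℂ)) *
            estermann l s α x (m + 1)‖
          ≤ ∑ x ∈ (Finset.range (m + 1)).filter (fun x => Nat.gcd x (m + 1) = 1),
            ‖Complex.exp (-2 * (π : ℂ) * I * x * l / ((m + 1 : ℕ) : ℂ)) *
              estermann l s α x (m + 1)‖ := norm_sum_le _ _
        _ ≤ ∑ _x ∈ (Finset.range (m + 1)).filter (fun x => Nat.gcd x (m + 1) = 1), C := by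
            apply Finset.sum_le_sum
            intro x _
            rw [norm_mul, hCoefNorm m x, one_mul]
            exact hEstNorm x (m + 1)
        _ = ((Finset.range (m + 1)).filter (fun x => Nat.gcd x (m + 1) = 1)).card * C := by
            rw [Finset.sum_const, nsmul_eq_mul]
        _ ≤ ((m + 1 : ℕ) : ℝ) * C := by
            apply mul_le_mul_of_nonneg_right _ hCnn
            have := Finset.card_le_card
              (Finset.filter_subset (fun x => Nat.gcd x (m + 1) = 1) (Finset.range (m + 1)))
            rw [Finset.card_range] at this
            exact_mod_cast this
    calc ((m + 1 : ℕ) : ℝ) ^ ((-3 : ℝ) - r) *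
        ‖∑ x ∈ (Finset.range (m + 1)).filter (fun x => Nat.gcd x (m + 1) = 1),
          Complex.exp (-2 * (π : ℂ) * I * x * l / ((m + 1 : ℕ) : ℂ)) *
            estermann l s α x (m + 1)‖
        ≤ ((m + 1 : ℕ) : ℝ) ^ ((-3 : ℝ) - r) * (((m + 1 : ℕ) : ℝ) * C) := by
          apply mul_le_mul_of_nonneg_left hsum_bound (by positivity)
      _ = (((m + 1 : ℕ) : ℝ) ^ ((-3 : ℝ) - r) * ((m + 1 : ℕ) : ℝ)) * C := by ring
      _ ≤ (((m : ℝ) + 1) ^ 2)⁻¹ * C := by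
          apply mul_le_mul_of_nonneg_right (hzpow_mul m) hCnn
      _ = C * (((m : ℝ) + 1) ^ 2)⁻¹ := by ring
  -- Part 4 : the identity
  have hterm : ∀ n : ℕ, DshiftTerm l α (-(r : ℂ) - 2) s n
      = riemannZeta (3 + (r : ℂ)) * ∑' m : ℕ, G (n, m) := by
    intro n
    rw [DshiftTerm, hσβ_exp n]
    have hmr : (∑' m : ℕ, G (n, m))
        = (∑' m : ℕ, ((m + 1 : ℕ) : ℂ) ^ (-3 - (r : ℤ)) * ram (m + 1) (n + 1)) *
          (sigmaC α (n + l + 1) / ((n + l + 1 : ℕ) : ℂ) ^ s) := by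
      simp only [hG]
      exact tsum_mul_right
    rw [hmr]
    ring
  have hinner : ∀ m : ℕ, (∑' n : ℕ, G (n, m))
      = ((m + 1 : ℕ) : ℂ) ^ (-3 - (r : ℤ)) *
          ∑ x ∈ (Finset.range (m + 1)).filter (fun x => Nat.gcd x (m + 1) = 1),
            Complex.exp (-2 * (π : ℂ) * I * x * l / ((m + 1 : ℕ) : ℂ)) *
              estermann l s α x (m + 1) := by
    intro m
    have h1 : ∀ n : ℕ, G (n, m)
        = ((m + 1 : ℕ) : ℂ) ^ (-3 - (r : ℤ)) *
            (ram (m + 1) (n + 1) * (sigmaC α (n + l + 1) / ((n + l + 1 : ℕ) : ℂ) ^ s)) := by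
      intro n
      simp only [hG]
      ring
    rw [tsum_congr h1, tsum_mul_left]
    congr 1
    have h2 : ∀ n : ℕ, ram (m + 1) (n + 1) * (sigmaC α (n + l + 1) / ((n + l + 1 : ℕ) : ℂ) ^ s)
        = ∑ x ∈ (Finset.range (m + 1)).filter (fun x => Nat.gcd x (m + 1) = 1),
            Complex.exp (-2 * (π : ℂ) * I * x * l / ((m + 1 : ℕ) : ℂ)) *
              estermannTerm l s α x (m + 1) n := by
      intro n
      rw [ram, Finset.sum_mul]
      refine Finset.sum_congr rfl fun x _ => ?_
      rw [estermannTerm]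
      rw [show Complex.exp (2 * (π : ℂ) * I * x * ((n + 1 : ℕ) : ℂ) / ((m + 1 : ℕ) : ℂ))
          = Complex.exp (-2 * (π : ℂ) * I * x * l / ((m + 1 : ℕ) : ℂ)) *
            Complex.exp (2 * (π : ℂ) * I * x * ((n + l + 1 : ℕ) : ℂ) / ((m + 1 : ℕ) : ℂ)) from by
        rw [← Complex.exp_add]; congr 1; push_cast; ring]
      ring
    rw [tsum_congr h2,
      Summable.tsum_finsetSum (fun x _ => (hEstSummable x (m + 1)).mul_left _)]
    refine Finset.sum_congr rfl fun x _ => ?_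
    rw [estermann, tsum_mul_left]
  have hGuncurry : Summable (Function.uncurry fun n m : ℕ => G (n, m)) := by
    exact hGsum.congr fun p => rfl
  have heq : Dshift l α (-(r : ℂ) - 2) s
      = riemannZeta (3 + (r : ℂ)) * ∑' m : ℕ, ((m + 1 : ℕ) : ℂ) ^ (-3 - (r : ℤ)) *
          ∑ x ∈ (Finset.range (m + 1)).filter (fun x => Nat.gcd x (m + 1) = 1),
            Complex.exp (-2 * (π : ℂ) * I * x * l / ((m + 1 : ℕ) : ℂ)) *
              estermann l s α x (m + 1) := by
    rw [Dshift, tsum_congr hterm, tsum_mul_left]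
    congr 1
    rw [← tsum_congr hinner]
    exact (Summable.tsum_comm hGuncurry).symm
  exact ⟨hD, fun m _ x => hEstSummable x m, hPart3, heq⟩

end
end

section
/- Let m ≥ 1 and x be integers, and let α, s ∈ ℂ with Re(s) > 1 and Re(s − α) > 1. Then the Estermann series Σ_{n≥1} σ_α(n) e^{2πixn/m} n^{−s} converges absolutely and equals m^{α−2s} · Σ_{u=1}^{m} Σ_{v=1}^{m} e^{2πixuv/m} · ζ(s−α, u/m) · ζ(s, v/m), where ζ(·,·) is the Hurwitz zeta function. -/
open Complex HurwitzZeta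
open scoped Real

noncomputable section

/-- The analytically continued Hurwitz zeta function `ζ(s, x)`, for a real parameter `x`
(viewed in `ℝ/ℤ`; for `0 < x ≤ 1` it continues `Σ_{n≥0} (n+x)^{-s}`). -/
def HZ (s : ℂ) (x : ℝ) : ℂ := hurwitzZeta (x : UnitAddCircle) s

lemma norm_natCast_cpow {n : ℕ} (hn : n ≠ 0) (w : ℂ) : ‖(n:ℂ) ^ w‖ = (n:ℝ) ^ w.re := by
  rw [show ((n:ℂ)) = ((n:ℝ):ℂ) by norm_cast,
    Complex.norm_cpow_eq_rpow_re_of_pos (by exact_mod_cast Nat.pos_of_ne_zero hn)]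

lemma norm_exp_e (m : ℕ) (x : ℤ) (n : ℕ) : ‖Complex.exp (2*(π:ℂ)*I*x*(n:ℂ)/m)‖ = 1 := by
  have h : 2*(π:ℂ)*I*x*(n:ℂ)/m = ((2*π*x*n/m : ℝ):ℂ) * I := by push_cast; ring
  rw [h, Complex.norm_exp_ofReal_mul_I]

lemma cast_split (m : ℕ) (hm : m ≠ 0) (j V : ℕ) (w : ℂ) :
    ((m * j + V : ℕ) : ℂ) ^ w = (m:ℂ)^w * ((j:ℂ) + (((V:ℝ)/m : ℝ) : ℂ))^w := by
  have hmR : (0:ℝ) < m := by exact_mod_cast Nat.pos_of_ne_zero hm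
  have h1 : ((m*j+V : ℕ):ℝ) = (m:ℝ) * ((j:ℝ) + (V:ℝ)/m) := by field_simp; push_cast; ring
  rw [show ((m*j+V:ℕ):ℂ) = (((m*j+V:ℕ):ℝ):ℂ) by norm_cast, h1, Complex.ofReal_mul,
    mul_cpow_ofReal_nonneg hmR.le (by positivity)]
  norm_num [Complex.ofReal_add, Complex.ofReal_natCast]

lemma exp_shift (m : ℕ) (hm : m ≠ 0) (x : ℤ) (U K : ℕ) :
    Complex.exp (2 * (π:ℂ) * I * x * ((U + m * K : ℕ) : ℂ) / m) =
    Complex.exp (2 * (π:ℂ) * I * x * (U : ℂ) / m) := by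
  have hm' : (m:ℂ) ≠ 0 := Nat.cast_ne_zero.mpr hm
  have h : 2 * (π:ℂ) * I * x * ((U + m * K : ℕ) : ℂ) / m
       = 2 * (π:ℂ) * I * x * (U:ℂ) / m + ((x * K : ℤ):ℂ) * (2 * π * I) := by
    push_cast; field_simp
  rw [h, Complex.exp_add, Complex.exp_int_mul_two_pi_mul_I, mul_one]

lemma sum_Icc_one (m : ℕ) (f : ℕ → ℂ) :
    ∑ u ∈ Finset.Icc 1 m, f u = ∑ u : Fin m, f (u.val + 1) := by
  rw [Fin.sum_univ_eq_sum_range (fun i => f (i+1)) m]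
  refine Finset.sum_nbij' (fun a => a - 1) (fun a => a + 1) ?_ ?_ ?_ ?_ ?_ <;>
    intros <;> simp_all <;> omega

lemma key_term (m : ℕ) (hm : m ≠ 0) (x : ℤ) (α s : ℂ) (j k u v : ℕ) :
    ((m*k+(u+1) : ℕ):ℂ)^α *
      Complex.exp (2*(π:ℂ)*I*x*(((m*j+(v+1))*(m*k+(u+1)) : ℕ):ℂ)/m) /
      ((((m*j+(v+1))*(m*k+(u+1))) : ℕ):ℂ)^s
    = (Complex.exp (2*(π:ℂ)*I*x*(((v:ℂ)+1))*(((u:ℂ)+1))/m) * ((m:ℂ)^(-s) * (m:ℂ)^(α-s))) *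
      ((1/((j:ℂ) + ((((v:ℕ)+1:ℕ):ℝ)/m : ℝ))^s) * (1/((k:ℂ) + ((((u:ℕ)+1:ℕ):ℝ)/m : ℝ))^(s-α))) := by
  have hmR : (0:ℝ) < m := by exact_mod_cast Nat.pos_of_ne_zero hm
  have hmC : (m:ℂ) ≠ 0 := Nat.cast_ne_zero.mpr hm
  have hb0 : ((m*k+(u+1) : ℕ):ℂ) ≠ 0 := Nat.cast_ne_zero.mpr (by omega)
  have hE : Complex.exp (2*(π:ℂ)*I*x*(((m*j+(v+1))*(m*k+(u+1)) : ℕ):ℂ)/m)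
      = Complex.exp (2*(π:ℂ)*I*x*(((v:ℂ)+1))*(((u:ℂ)+1))/m) := by
    rw [show (m*j+(v+1))*(m*k+(u+1)) = (v+1)*(u+1) + m*(m*j*k + j*(u+1) + k*(v+1)) by ring]
    rw [exp_shift m hm x ((v+1)*(u+1)) _]
    congr 1
    push_cast
    ring
  rw [hE, Nat.cast_mul, Complex.natCast_mul_natCast_cpow]
  set A : ℂ := ((m*j+(v+1) : ℕ):ℂ) with hA
  set B : ℂ := ((m*k+(u+1) : ℕ):ℂ) with hB
  have hBs : B^s ≠ 0 := by rw [Ne, Complex.cpow_eq_zero_iff]; exact fun h => hb0 h.1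
  set E : ℂ := Complex.exp (2*(π:ℂ)*I*x*(((v:ℂ)+1))*(((u:ℂ)+1))/m) with hEE
  have step1 : B^α * E / (A^s * B^s) = E * B^(α-s) / A^s := by
    rw [Complex.cpow_sub _ _ hb0]
    field_simp
  rw [step1, hA, hB, cast_split m hm j (v+1) s, cast_split m hm k (u+1) (α-s),
    Complex.cpow_neg (m:ℂ) s,
    show (1:ℂ)/((k:ℂ) + ((((u:ℕ)+1:ℕ):ℝ)/m : ℝ))^(s-α)
        = ((k:ℂ) + ((((u:ℕ)+1:ℕ):ℝ)/m : ℝ))^(α-s) by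
      rw [show α - s = -(s-α) by ring, Complex.cpow_neg, one_div]]
  ring

/-- the reindexing equivalence -/
def reE (m : ℕ) : ((Fin m × Fin m) × (ℕ × ℕ)) ≃ ((ℕ × Fin m) × (ℕ × Fin m)) where
  toFun q := ((q.2.1, q.1.2), (q.2.2, q.1.1))
  invFun q := ((q.2.2, q.1.2), (q.1.1, q.2.1))
  left_inv q := rfl
  right_inv q := rfl

/-- for `m ≥ 1`, `x ∈ ℤ`, and `Re s > 1`, `Re (s - α) > 1`, the Estermann
series converges absolutely and
`Σ_{n≥1} σ_α(n) e^{2πixn/m} n^{-s} = m^{α-2s} Σ_{u=1}^m Σ_{v=1}^m e^{2πixuv/m}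
ζ(s-α, u/m) ζ(s, v/m)`. -/
theorem estermann_eq_hurwitz (m : ℕ) (hm : 1 ≤ m) (x : ℤ) (α s : ℂ)
    (hs : 1 < s.re) (hsα : 1 < (s - α).re) :
    Summable (fun n : ℕ =>
      sigmaC α (n + 1) * Complex.exp (2 * (π : ℂ) * I * x * ((n + 1 : ℕ) : ℂ) / m) /
        ((n + 1 : ℕ) : ℂ) ^ s) ∧
    (∑' n : ℕ,
      sigmaC α (n + 1) * Complex.exp (2 * (π : ℂ) * I * x * ((n + 1 : ℕ) : ℂ) / m) /
        ((n + 1 : ℕ) : ℂ) ^ s) =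
      (m : ℂ) ^ (α - 2 * s) * ∑ u ∈ Finset.Icc 1 m, ∑ v ∈ Finset.Icc 1 m,
        Complex.exp (2 * (π : ℂ) * I * x * u * v / m) *
          HZ (s - α) ((u : ℝ) / m) * HZ s ((v : ℝ) / m) := by
  have hm0 : m ≠ 0 := by omega
  have hmC : (m:ℂ) ≠ 0 := Nat.cast_ne_zero.mpr hm0
  have hmR : (0:ℝ) < m := by exact_mod_cast Nat.pos_of_ne_zero hm0
  have hs0 : s ≠ 0 := by
    intro h; rw [h] at hs; simp at hs; linarith
  set G : ℕ × ℕ → ℂ := fun p =>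
    (p.2 : ℂ) ^ α * Complex.exp (2 * (π:ℂ) * I * x * ((p.1 * p.2 : ℕ) : ℂ) / m) /
      ((p.1 * p.2 : ℕ) : ℂ) ^ s with hGdef
  -- norm identity
  have hGnorm : ∀ p : ℕ × ℕ, ‖G p‖ = ((p.1:ℝ) ^ s.re)⁻¹ * ((p.2:ℝ) ^ (s-α).re)⁻¹ := by
    rintro ⟨a, b⟩
    rcases eq_or_ne a 0 with rfl | ha
    · simp [hGdef, Complex.zero_cpow hs0, Real.zero_rpow (by linarith : s.re ≠ 0)]
    rcases eq_or_ne b 0 with rfl | hb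
    · have hsub : s.re - α.re ≠ 0 := by
        have := hsα; rw [Complex.sub_re] at this; linarith
      simp [hGdef, Complex.zero_cpow hs0, Complex.sub_re, Real.zero_rpow hsub]
    have hab : a * b ≠ 0 := by positivity
    have haR : (0:ℝ) < a := by exact_mod_cast Nat.pos_of_ne_zero ha
    have hbR : (0:ℝ) < b := by exact_mod_cast Nat.pos_of_ne_zero hb
    simp only [hGdef]
    rw [norm_div, norm_mul, norm_natCast_cpow hb, norm_exp_e, norm_natCast_cpow hab, mul_one]
    push_cast
    rw [Real.mul_rpow haR.le hbR.le, Complex.sub_re, Real.rpow_sub hbR]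
    have h1 : (a:ℝ) ^ s.re ≠ 0 := by positivity
    have h2 : (b:ℝ) ^ s.re ≠ 0 := by positivity
    have h3 : (b:ℝ) ^ α.re ≠ 0 := by positivity
    field_simp
  -- summability of G
  have hGsum : Summable G := by
    rw [← summable_norm_iff]
    have h1 : Summable (fun n : ℕ => ((n:ℝ) ^ s.re)⁻¹) := Real.summable_nat_rpow_inv.mpr hs
    have h2 : Summable (fun n : ℕ => ((n:ℝ) ^ (s-α).re)⁻¹) := Real.summable_nat_rpow_inv.mpr hsα
    exact (h1.mul_of_nonneg h2 (fun n => by positivity) (fun n => by positivity)).congr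
      (fun p => (hGnorm p).symm)
  set L : ℂ := ∑' p, G p with hLdef
  have hLsum : HasSum G L := hGsum.hasSum
  -- Part A : fiberwise over multiplication
  set T : ℕ → ℂ := fun n =>
    sigmaC α n * Complex.exp (2 * (π:ℂ) * I * x * (n : ℂ) / m) / (n : ℂ) ^ s with hTdef
  have key : ∀ n : ℕ, (∑' p : ((fun p : ℕ × ℕ => p.1 * p.2) ⁻¹' {n}), G p) = T n := by
    intro n
    rcases eq_or_ne n 0 with rfl | hn
    · have h0 : ∀ q : ((fun p : ℕ × ℕ => p.1 * p.2) ⁻¹' {0} : Set (ℕ × ℕ)), G q = 0 := by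
        rintro ⟨⟨a, b⟩, hq⟩
        have hab : a * b = 0 := hq
        show (b:ℂ)^α * Complex.exp (2*(π:ℂ)*I*x*((a*b : ℕ):ℂ)/m) / ((a*b : ℕ):ℂ)^s = 0
        rw [hab]
        simp [Complex.zero_cpow hs0]
      rw [tsum_congr h0, tsum_zero]
      simp [hTdef, sigmaC, Complex.zero_cpow hs0]
    · rw [show (fun p : ℕ × ℕ => p.1 * p.2) ⁻¹' {n} = ↑n.divisorsAntidiagonal by
        ext p; simp [Nat.mem_divisorsAntidiagonal, hn], Finset.tsum_subtype']
      calc ∑ p ∈ n.divisorsAntidiagonal, G p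
          = ∑ p ∈ n.divisorsAntidiagonal,
              (p.2:ℂ)^α * (Complex.exp (2*(π:ℂ)*I*x*(n:ℂ)/m) / (n:ℂ)^s) := by
            refine Finset.sum_congr rfl fun p hp => ?_
            have hpn : p.1 * p.2 = n := (Nat.mem_divisorsAntidiagonal.mp hp).1
            simp only [hGdef, hpn, mul_div_assoc]
        _ = (∑ p ∈ n.divisorsAntidiagonal, (p.2:ℂ)^α) *
              (Complex.exp (2*(π:ℂ)*I*x*(n:ℂ)/m) / (n:ℂ)^s) := by
            rw [← Finset.sum_mul]
        _ = T n := by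
            rw [Nat.sum_divisorsAntidiagonal' (f := fun _ d => (d:ℂ)^α)]
            simp only [hTdef, sigmaC, mul_div_assoc]
  have hfib : HasSum T L := by
    have h1 := hLsum.tsum_fiberwise (fun p => p.1 * p.2)
    simpa only [key] using h1
  have hT0 : T 0 = 0 := by simp [hTdef, sigmaC, Complex.zero_cpow hs0]
  have hSummable : Summable (fun n : ℕ => T (n + 1)) :=
    (summable_nat_add_iff 1).mpr hfib.summable
  have htsum : (∑' n : ℕ, T (n + 1)) = L := by
    have h2 := Summable.tsum_eq_zero_add hfib.summable
    rw [hfib.tsum_eq, hT0, zero_add] at h2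
    exact h2.symm
  -- Part B : compute L
  set g : ((ℕ × Fin m) × (ℕ × Fin m)) → ℕ × ℕ := fun q =>
    (m * q.1.1 + q.1.2 + 1, m * q.2.1 + q.2.2 + 1) with hgdef
  have hcoord : ∀ (j j' : ℕ) (u u' : Fin m), m * j + u.val + 1 = m * j' + u'.val + 1 →
      j = j' ∧ u = u' := by
    intro j j' u u' h
    have h' : m * j + u.val = m * j' + u'.val := by omega
    have hu := congrArg (· % m) h'
    simp only [Nat.mul_add_mod, Nat.mod_eq_of_lt u.isLt, Nat.mod_eq_of_lt u'.isLt] at hu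
    refine ⟨?_, Fin.ext hu⟩
    have : m * j = m * j' := by omega
    exact Nat.eq_of_mul_eq_mul_left (Nat.pos_of_ne_zero hm0) this
  have hginj : Function.Injective g := by
    rintro ⟨⟨j, u⟩, ⟨k, v⟩⟩ ⟨⟨j', u'⟩, ⟨k', v'⟩⟩ h
    simp only [hgdef, Prod.mk.injEq] at h
    obtain ⟨h1, h2⟩ := hcoord _ _ _ _ h.1
    obtain ⟨h3, h4⟩ := hcoord _ _ _ _ h.2
    simp [h1, h2, h3, h4]
  have hrange : Function.support G ⊆ Set.range g := by
    rintro ⟨a, b⟩ hp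
    have ha : a ≠ 0 := by
      rintro rfl; apply hp; simp [hGdef, Complex.zero_cpow hs0]
    have hb : b ≠ 0 := by
      rintro rfl; apply hp; simp [hGdef, Complex.zero_cpow hs0]
    refine ⟨(((a-1)/m, ⟨(a-1) % m, Nat.mod_lt _ (Nat.pos_of_ne_zero hm0)⟩),
            ((b-1)/m, ⟨(b-1) % m, Nat.mod_lt _ (Nat.pos_of_ne_zero hm0)⟩)), ?_⟩
    have h1 := Nat.div_add_mod (a-1) m
    have h2 := Nat.div_add_mod (b-1) m
    simp only [hgdef, Prod.mk.injEq]
    constructor <;> [skip; skip] <;> omega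
  have hGg : Summable (fun q : (ℕ × Fin m) × (ℕ × Fin m) => G (g q)) :=
    hGsum.comp_injective hginj
  have hL2 : (∑' q : (ℕ × Fin m) × (ℕ × Fin m), G (g q)) = L := hginj.tsum_eq hrange
  have hsum3 : Summable (fun r : (Fin m × Fin m) × (ℕ × ℕ) => G (g (reE m r))) :=
    hGg.comp_injective (reE m).injective
  have hL3 : (∑' r : (Fin m × Fin m) × (ℕ × ℕ), G (g (reE m r)))
      = ∑' q : (ℕ × Fin m) × (ℕ × Fin m), G (g q) := (reE m).tsum_eq (fun q => G (g q))
  have hL4 : (∑' r : (Fin m × Fin m) × (ℕ × ℕ), G (g (reE m r)))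
      = ∑' uv : Fin m × Fin m, ∑' jk : ℕ × ℕ, G (g (reE m (uv, jk))) := Summable.tsum_prod hsum3
  -- inner sums
  have inner : ∀ u v : Fin m, (∑' jk : ℕ × ℕ, G (g (reE m ((u, v), jk))))
      = (Complex.exp (2*(π:ℂ)*I*x*(((v:ℕ):ℂ)+1)*(((u:ℕ):ℂ)+1)/m) *
          ((m:ℂ)^(-s) * (m:ℂ)^(α-s))) *
        (HZ s ((((v:ℕ)+1:ℕ):ℝ)/m) * HZ (s-α) ((((u:ℕ)+1:ℕ):ℝ)/m)) := by
    intro u v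
    have hbound : ∀ w : Fin m, ((((w:ℕ)+1:ℕ):ℝ)/m) ∈ Set.Icc (0:ℝ) 1 := by
      intro w
      constructor
      · positivity
      · rw [div_le_one hmR]
        exact_mod_cast Nat.succ_le_of_lt w.isLt
    have hA : HasSum (fun j : ℕ => 1 / ((j:ℂ) + (((((v:ℕ)+1:ℕ):ℝ)/m : ℝ) : ℂ)) ^ s)
        (HZ s ((((v:ℕ)+1:ℕ):ℝ)/m)) := hasSum_hurwitzZeta_of_one_lt_re (hbound v) hs
    have hB : HasSum (fun k : ℕ => 1 / ((k:ℂ) + (((((u:ℕ)+1:ℕ):ℝ)/m : ℝ) : ℂ)) ^ (s-α))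
        (HZ (s-α) ((((u:ℕ)+1:ℕ):ℝ)/m)) := hasSum_hurwitzZeta_of_one_lt_re (hbound u) hsα
    have h1n := summable_norm_iff.mpr hA.summable
    have h2n := summable_norm_iff.mpr hB.summable
    have hABs := summable_mul_of_summable_norm h1n h2n
    have hAB := (hA.mul hB hABs).mul_left
      (Complex.exp (2*(π:ℂ)*I*x*(((v:ℕ):ℂ)+1)*(((u:ℕ):ℂ)+1)/m) * ((m:ℂ)^(-s) * (m:ℂ)^(α-s)))
    rw [← hAB.tsum_eq]
    refine tsum_congr fun jk => ?_
    have harg : g (reE m ((u, v), jk)) = (m*jk.1+((v:ℕ)+1), m*jk.2+((u:ℕ)+1)) := by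
      simp only [hgdef, reE, Equiv.coe_fn_mk, Prod.mk.injEq]
      constructor <;> omega
    rw [harg]
    exact key_term m hm0 x α s jk.1 jk.2 u v
  -- assemble
  constructor
  · exact hSummable
  · rw [htsum]
    rw [← hL2, ← hL3, hL4, tsum_fintype, Fintype.sum_prod_type]
    simp only [inner]
    rw [sum_Icc_one m, show (m:ℂ)^(α-2*s) = (m:ℂ)^(-s) * (m:ℂ)^(α-s) by
      rw [← Complex.cpow_add _ _ hmC]; ring_nf]
    rw [Finset.mul_sum]
    refine Finset.sum_congr rfl fun u _ => ?_
    rw [sum_Icc_one m, Finset.mul_sum]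
    refine Finset.sum_congr rfl fun v _ => ?_
    have hHZ1 : (((u:ℕ):ℝ)+1)/m = ((((u:ℕ)+1:ℕ)):ℝ)/m := by push_cast; ring
    have hHZ2 : (((v:ℕ):ℝ)+1)/m = ((((v:ℕ)+1:ℕ)):ℝ)/m := by push_cast; ring
    push_cast
    rw [hHZ1, hHZ2]
    ring_nf

end
end
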